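/- For every natural number n ≥ 2, the sum of the triple products C_i · C_j · C_k over all triples (i, j, k) of natural numbers with i + j + k = n - 1 equals C_{n+1} - C_n; that is, ∑_{i+j+k=n-1} C_i C_j C_k = C_{n+1} - C_n. -/

import Mathlib

open Finset

lemma tuple3_sum (f : ℕ → ℕ → ℕ → ℕ) (m : ℕ) :
    ∑ p ∈ Finset.Nat.antidiagonalTuple 3 m, f (p 0) (p 1) (p 2)
    = ∑ ab ∈ Finset.HasAntidiagonal.antidiagonal m, ∑ cd ∈ Finset.HasAntidiagonal.antidiagonal ab.2,
        f ab.1 cd.1 cd.2 := by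
  rw [Finset.sum_sigma']
  refine Finset.sum_nbij' (fun p => ⟨(p 0, p 1 + p 2), (p 1, p 2)⟩)
    (fun q => ![q.1.1, q.2.1, q.2.2] : ((_ : ℕ × ℕ) × ℕ × ℕ) → Fin 3 → ℕ) ?_ ?_ ?_ ?_ ?_
  · intro p hp
    rw [Finset.Nat.mem_antidiagonalTuple, Fin.sum_univ_three] at hp
    simp only [Finset.mem_sigma, Finset.HasAntidiagonal.mem_antidiagonal]
    exact ⟨by omega, trivial⟩
  · intro q hq
    simp only [Finset.mem_sigma, Finset.HasAntidiagonal.mem_antidiagonal] at hq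
    rw [Finset.Nat.mem_antidiagonalTuple, Fin.sum_univ_three]
    simp
    omega
  · intro p hp
    funext i
    fin_cases i <;> simp
  · intro q hq
    simp only [Finset.mem_sigma, Finset.HasAntidiagonal.mem_antidiagonal] at hq
    obtain ⟨⟨a, b⟩, c, d⟩ := q
    simp_all
  · intro p hp
    simp

theorem catalan_triple_sum (n : ℕ) (hn : 2 ≤ n) :
    ∑ p ∈ Finset.Nat.antidiagonalTuple 3 (n - 1),
      catalan (p 0) * catalan (p 1) * catalan (p 2) =
    catalan (n + 1) - catalan n := by
  obtain ⟨m, rfl⟩ : ∃ m, n = m + 1 := ⟨n - 1, by omega⟩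
  simp only [Nat.add_sub_cancel]
  rw [tuple3_sum (fun a b c => catalan a * catalan b * catalan c)]
  have key : ∑ ab ∈ Finset.HasAntidiagonal.antidiagonal m, ∑ cd ∈ Finset.HasAntidiagonal.antidiagonal ab.2,
      catalan ab.1 * catalan cd.1 * catalan cd.2
      = ∑ ab ∈ Finset.HasAntidiagonal.antidiagonal m, catalan ab.1 * catalan (ab.2 + 1) := by
    refine Finset.sum_congr rfl fun ab _ => ?_
    rw [catalan_succ', Finset.mul_sum]
    exact Finset.sum_congr rfl fun cd _ => by ring
  rw [key]
  have h2 : catalan (m + 1 + 1) = catalan (m + 1) +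
      ∑ ab ∈ Finset.HasAntidiagonal.antidiagonal m, catalan ab.1 * catalan (ab.2 + 1) := by
    rw [catalan_succ', Finset.Nat.antidiagonal_succ', Finset.sum_cons, Finset.sum_map]
    simp [catalan_zero]
  omega
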